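/- Let f : (0,∞) → ℝ be differentiable, let A be the general spherically symmetric flat SO(3)-connection determined by f, and fix x ∈ ℝ³∖{0}. For s > 0 define the 3×3 matrix M(s) with entries M(s)_i{}^j := Σ_{μ,k} x^μ A_μ{}^k(sx) ε_{ki}{}^j, i.e. the contraction of the connection along the ray through x. Then the matrices M(s) for different parameter values commute: M(s) M(t) = M(t) M(s) for all s, t > 0; consequently the path-ordered exponential along the ray coincides with the ordinary matrix exponential. -/

import Mathlib

/-- The totally antisymmetric Levi-Civita symbol on three indices, `eps 0 1 2 = 1`. -/
noncomputable def eps (i j k : Fin 3) : ℝ :=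
  ((j : ℝ) - (i : ℝ)) * ((k : ℝ) - (i : ℝ)) * ((k : ℝ) - (j : ℝ)) / 2

/-- The radius `r = |x|` of a point `x ∈ ℝ³`. -/
noncomputable def rad (x : Fin 3 → ℝ) : ℝ := Real.sqrt (∑ i, x i ^ 2)

/-- The general spherically symmetric flat SO(3)-connection determined by `f`:
`A_μ{}^i = ε_{μij} x_j (cos f - 1)/r² + δ_μ^i sin f / r + x_μ x^i (r f' - sin f)/r³`. -/
noncomputable def Aconn (f : ℝ → ℝ) (x : Fin 3 → ℝ) (μ i : Fin 3) : ℝ :=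
  (∑ j, eps μ i j * x j) * (Real.cos (f (rad x)) - 1) / rad x ^ 2 +
  (if μ = i then (1 : ℝ) else 0) * Real.sin (f (rad x)) / rad x +
  x μ * x i * (rad x * deriv f (rad x) - Real.sin (f (rad x))) / rad x ^ 3

lemma rad_pos (x : Fin 3 → ℝ) (hx : x ≠ 0) : 0 < rad x := by
  have : ∃ i, x i ≠ 0 := by
    by_contra h
    push_neg at h
    exact hx (funext h)
  obtain ⟨i, hi⟩ := this
  have h1 : (0:ℝ) < ∑ j, x j ^ 2 :=
    Finset.sum_pos' (fun j _ => sq_nonneg _) ⟨i, Finset.mem_univ i, by positivity⟩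
  exact Real.sqrt_pos.mpr h1

lemma rad_smul (x : Fin 3 → ℝ) (s : ℝ) (hs : 0 ≤ s) : rad (s • x) = s * rad x := by
  unfold rad
  have : ∑ i, (s • x) i ^ 2 = s ^ 2 * ∑ i, x i ^ 2 := by
    simp [Finset.mul_sum, mul_pow]
  rw [this, Real.sqrt_mul (by positivity), Real.sqrt_sq hs]

lemma rad_sq (x : Fin 3 → ℝ) : rad x ^ 2 = ∑ i, x i ^ 2 :=
  Real.sq_sqrt (Finset.sum_nonneg fun i _ => sq_nonneg _)

lemma key (f : ℝ → ℝ) (x : Fin 3 → ℝ) (hx : x ≠ 0) (s : ℝ) (hs : 0 < s) (k : Fin 3) :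
    ∑ μ, x μ * Aconn f (s • x) μ k = x k * deriv f (rad (s • x)) := by
  have hr : 0 < rad x := rad_pos x hx
  have hR : rad (s • x) = s * rad x := rad_smul x s hs.le
  have hr2 : x 0 ^ 2 + x 1 ^ 2 + x 2 ^ 2 = rad x ^ 2 := by
    rw [rad_sq]; simp [Fin.sum_univ_three]
  have hrne : rad x ≠ 0 := ne_of_gt hr
  have hsne : s ≠ 0 := ne_of_gt hs
  fin_cases k
  · simp only [Aconn, hR, Fin.sum_univ_three, eps, Pi.smul_apply, smul_eq_mul]
    norm_num [Fin.ext_iff]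
    field_simp
    linear_combination (x 0 *
      (s * rad x * deriv f (s * rad x) - Real.sin (f (s * rad x)))) * hr2
  · simp only [Aconn, hR, Fin.sum_univ_three, eps, Pi.smul_apply, smul_eq_mul]
    norm_num [Fin.ext_iff]
    field_simp
    linear_combination (x 1 *
      (s * rad x * deriv f (s * rad x) - Real.sin (f (s * rad x)))) * hr2
  · show ∑ μ, x μ * Aconn f (s • x) μ 2 = x 2 * deriv f (rad (s • x))
    simp only [Aconn, hR, Fin.sum_univ_three, eps, Pi.smul_apply, smul_eq_mul]
    norm_num [Fin.ext_iff]
    field_simp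
    linear_combination (x 2 *
      (s * rad x * deriv f (s * rad x) - Real.sin (f (s * rad x)))) * hr2

/-- the matrices `M(s)_i{}^j = x^μ A_μ{}^k(sx) ε_{ki}{}^j`, obtained by
contracting the spherically symmetric flat connection along the ray through `x`,
commute with one another: `M(s) M(t) = M(t) M(s)` for all `s, t > 0`. -/
theorem stmt15 (f : ℝ → ℝ) (hf : ∀ r > 0, DifferentiableAt ℝ f r)
    (x : Fin 3 → ℝ) (hx : x ≠ 0)
    (M : ℝ → Matrix (Fin 3) (Fin 3) ℝ)
    (hM : ∀ s > 0, ∀ i j, M s i j = ∑ μ, ∑ k, x μ * Aconn f (s • x) μ k * eps k i j) :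
    ∀ s > 0, ∀ t > 0, M s * M t = M t * M s := by
  have hM' : ∀ s > 0, ∀ i j, M s i j =
      deriv f (rad (s • x)) * ∑ k, x k * eps k i j := by
    intro s hs i j
    rw [hM s hs i j, Finset.sum_comm]
    rw [Finset.mul_sum]
    apply Finset.sum_congr rfl
    intro k _
    have : ∑ μ, x μ * Aconn f (s • x) μ k * eps k i j =
        (∑ μ, x μ * Aconn f (s • x) μ k) * eps k i j := by
      rw [Finset.sum_mul]
    rw [this, key f x hx s hs k]
    ring
  intro s hs t ht
  ext i j
  simp only [Matrix.mul_apply]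
  apply Finset.sum_congr rfl
  intro m _
  rw [hM' s hs, hM' t ht, hM' s hs, hM' t ht]
  ring
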